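/- Define w_n = min{ t ≥ 1 : e'_t ≥ n } for n ≥ 1, where e'_t = b_1 + b_2 + ⋯ + b_t is the ending position of the t'th run of (d'_k)_{k≥1}. Then w_1 = 1 and, for all n ≥ 1, w_{2n} = w_{2n−1} + (w_n mod 2) and w_{2n+1} = w_{2n} + 1. -/

import Mathlib

/-- `e` enumerates the ending positions of the runs of the sequence `s`
(whose terms are `s 1, s 2, s 3, …`; the value `s 0` is irrelevant).
A run is a maximal block of consecutive identical values; the `n`'th run
(`n ≥ 1`) occupies positions `e (n-1) + 1, …, e n`. -/
def IsRunEnds {α : Type*} (s : ℕ → α) (e : ℕ → ℕ) : Prop :=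
  e 0 = 0 ∧ StrictMono e ∧
    (∀ n, 1 ≤ n → ∀ i, e (n - 1) < i → i ≤ e n → s i = s (e n)) ∧
    (∀ n, 1 ≤ n → s (e n) ≠ s (e n + 1))

/-- The regular paperfolding sequence over `{0,1}`: `q 0 = 0`,
`q (2n) = q n` for `n ≥ 1`, `q (4n+1) = 0` and `q (4n+3) = 1` for `n ≥ 0`. -/
def IsRegularPaperfolding (q : ℕ → ℕ) : Prop :=
  (∀ n, q n = 0 ∨ q n = 1) ∧ q 0 = 0 ∧
    (∀ n, 1 ≤ n → q (2 * n) = q n) ∧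
    (∀ n, q (4 * n + 1) = 0) ∧ (∀ n, q (4 * n + 3) = 1)

/-- The first difference sequence `d` of `q`: `d 1 = 1` and
`d n = q n - q (n-1)` for `n ≥ 2`. (The value at `0` is irrelevant.) -/
def dseq (q : ℕ → ℕ) (n : ℕ) : ℤ :=
  if n = 1 then 1 else (q n : ℤ) - (q (n - 1) : ℤ)

/-- `d' n = |d n|`, as a natural number. -/
def dabs (q : ℕ → ℕ) (n : ℕ) : ℕ := (dseq q n).natAbs

/-- with `e' t = b 1 + ⋯ + b t` (the ending position of the
`t`'th run of `(d'_k)_{k≥1}`) and `w n = min { t ≥ 1 : e' t ≥ n }`,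
one has `w 1 = 1`, `w (2n) = w (2n-1) + (w n mod 2)` and
`w (2n+1) = w (2n) + 1` for all `n ≥ 1`. -/
theorem cloitre_w_recurrence
    (q : ℕ → ℕ) (hq : IsRegularPaperfolding q)
    (e : ℕ → ℕ) (he : IsRunEnds (dabs q) e)
    (b : ℕ → ℕ) (hb : ∀ n, 1 ≤ n → b n = e n - e (n - 1))
    (w : ℕ → ℕ)
    (hw : ∀ n, 1 ≤ n → w n = sInf {t : ℕ | 1 ≤ t ∧ n ≤ ∑ i ∈ Finset.Icc 1 t, b i}) :
    w 1 = 1 ∧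
      ∀ n, 1 ≤ n → w (2 * n) = w (2 * n - 1) + w n % 2 ∧
        w (2 * n + 1) = w (2 * n) + 1 := by
  obtain ⟨hq01, hq0, hq2, hq1', hq3'⟩ := hq
  obtain ⟨he0, hemono, herun, hene⟩ := he
  have hqle : ∀ n, q n ≤ 1 := fun n => by rcases hq01 n with h | h <;> omega
  have hdle : ∀ n, dabs q n ≤ 1 := by
    intro n
    unfold dabs dseq
    split
    · simp
    · have h1 := hqle n; have h2 := hqle (n - 1); omega
  have hd1 : dabs q 1 = 1 := by simp [dabs, dseq]
  -- sums of b equal e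
  have hsum : ∀ t, ∑ i ∈ Finset.Icc 1 t, b i = e t := by
    intro t
    induction t with
    | zero => simp [he0]
    | succ t ih =>
      rw [Finset.sum_Icc_succ_top (by omega : 1 ≤ t + 1), ih, hb (t + 1) (by omega)]
      have := hemono.monotone (show t ≤ t + 1 by omega)
      simp only [Nat.add_sub_cancel]
      omega
  have hw' : ∀ n, 1 ≤ n → w n = sInf {t : ℕ | 1 ≤ t ∧ n ≤ e t} := by
    intro n hn
    rw [hw n hn]
    congr 1
    ext t
    simp [hsum]
  -- membership facts about w
  have hwmem : ∀ n, 1 ≤ n → 1 ≤ w n ∧ n ≤ e (w n) ∧ e (w n - 1) < n := by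
    intro n hn
    have hne : ({t : ℕ | 1 ≤ t ∧ n ≤ e t} : Set ℕ).Nonempty :=
      ⟨n, hn, hemono.le_apply⟩
    have hmem := Nat.sInf_mem hne
    rw [← hw' n hn] at hmem
    obtain ⟨h1, h2⟩ := hmem
    refine ⟨h1, h2, ?_⟩
    by_cases hw1 : w n = 1
    · rw [hw1]; simpa [he0] using (show 0 < n by omega)
    · have hlt : w n - 1 < sInf {t : ℕ | 1 ≤ t ∧ n ≤ e t} := by
        rw [← hw' n hn]; omega
      have := Nat.notMem_of_lt_sInf hlt
      simp only [Set.mem_setOf_eq, not_and, not_le] at this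
      exact this (by omega)
  have hwuniq : ∀ n t, 1 ≤ n → 1 ≤ t → e (t - 1) < n → n ≤ e t → w n = t := by
    intro n t hn ht h1 h2
    obtain ⟨hm1, hm2, hm3⟩ := hwmem n hn
    rcases lt_trichotomy (w n) t with h | h | h
    · have : e (w n) ≤ e (t - 1) := hemono.monotone (by omega)
      omega
    · exact h
    · have : e t ≤ e (w n - 1) := hemono.monotone (by omega)
      omega
  -- step lemma
  have hstep : ∀ n, 1 ≤ n →
      (dabs q (n + 1) = dabs q n → w (n + 1) = w n) ∧
      (dabs q (n + 1) ≠ dabs q n → w (n + 1) = w n + 1) := by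
    intro n hn
    obtain ⟨h1, h2, h3⟩ := hwmem n hn
    rcases lt_or_eq_of_le h2 with hlt | heq
    · have heqw : w (n + 1) = w n := hwuniq (n + 1) (w n) (by omega) h1 (by omega) (by omega)
      have hsame : dabs q (n + 1) = dabs q n := by
        have ha := herun (w n) h1 (n + 1) (by omega) (by omega)
        have hb' := herun (w n) h1 n h3 h2
        rw [ha, hb']
      exact ⟨fun _ => heqw, fun hne => absurd hsame hne⟩
    · have hdiff : dabs q (n + 1) ≠ dabs q n := by
        have := hene (w n) h1
        rw [← heq] at this
        exact fun h => this (by rw [← h])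
      have hlt2 : e (w n) < e (w n + 1) := hemono (by omega)
      have heqw : w (n + 1) = w n + 1 :=
        hwuniq (n + 1) (w n + 1) (by omega) (by omega)
          (by simpa using (by omega : e (w n) < n + 1)) (by omega)
      exact ⟨fun h => absurd h hdiff, fun _ => heqw⟩
  -- values at run ends alternate: dabs q (e t) = t % 2
  have hse : ∀ t, 1 ≤ t → dabs q (e t) = t % 2 := by
    intro t ht
    induction t with
    | zero => omega
    | succ t ih =>
      by_cases ht0 : t = 0
      · subst ht0
        have h1 : 1 ≤ e 1 := by
          have := hemono (show 0 < 1 by omega); omega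
        have := herun 1 le_rfl 1 (by simp [he0]) h1
        rw [← this, hd1]
      · have ht1 : 1 ≤ t := by omega
        have iht := ih ht1
        have hne2 := hene t ht1
        have hlt2 : e t + 1 ≤ e (t + 1) := hemono (by omega)
        have hnext : dabs q (e t + 1) = dabs q (e (t + 1)) :=
          herun (t + 1) (by omega) (e t + 1) (by simp) hlt2
        have hb1 := hdle (e (t + 1)); have hb2 := hdle (e t)
        omega
  have hpar : ∀ n, 1 ≤ n → dabs q n = w n % 2 := by
    intro n hn
    obtain ⟨h1, h2, h3⟩ := hwmem n hn
    rw [herun (w n) h1 n h3 h2, hse (w n) h1]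
  -- arithmetic fact A : dabs q (2n+1) ≠ dabs q (2n)
  have lemA : ∀ n, 1 ≤ n → dabs q (2 * n + 1) ≠ dabs q (2 * n) := by
    intro n hn
    have hodd : q (2 * n + 1) ≠ q (2 * n - 1) := by
      rcases Nat.even_or_odd n with ⟨m, hm⟩ | ⟨m, hm⟩
      · have h1 : q (2 * n + 1) = 0 := by
          rw [show 2 * n + 1 = 4 * m + 1 by omega]; exact hq1' m
        have h2 : q (2 * n - 1) = 1 := by
          rw [show 2 * n - 1 = 4 * (m - 1) + 3 by omega]; exact hq3' (m - 1)
        omega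
      · have h1 : q (2 * n + 1) = 1 := by
          rw [show 2 * n + 1 = 4 * m + 3 by omega]; exact hq3' m
        have h2 : q (2 * n - 1) = 0 := by
          rw [show 2 * n - 1 = 4 * m + 1 by omega]; exact hq1' m
        omega
    have e1 := hqle (2 * n + 1); have e2 := hqle (2 * n); have e3 := hqle (2 * n - 1)
    unfold dabs dseq
    rw [if_neg (by omega : ¬ 2 * n + 1 = 1), if_neg (by omega : ¬ 2 * n = 1)]
    simp only [Nat.add_sub_cancel]
    omega
  -- arithmetic fact B : dabs q (2n) = dabs q (2n-1) ↔ dabs q n = 0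
  have lemB : ∀ n, 1 ≤ n → (dabs q (2 * n) = dabs q (2 * n - 1) ↔ dabs q n = 0) := by
    intro n hn
    by_cases hn1 : n = 1
    · subst hn1
      have h2 : q 2 = q 1 := hq2 1 le_rfl
      have hd2 : dabs q 2 = 0 := by unfold dabs dseq; norm_num; omega
      rw [hd2]
      simp [hd1]
    · have hn2 : 2 ≤ n := by omega
      have hq2n : q (2 * n) = q n := hq2 n hn
      have hq2n2 : q (2 * n - 2) = q (n - 1) := by
        rw [show 2 * n - 2 = 2 * (n - 1) by omega]; exact hq2 (n - 1) (by omega)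
      have e1 := hqle n; have e2 := hqle (n - 1); have e3 := hqle (2 * n - 1)
      unfold dabs dseq
      rw [if_neg (by omega : ¬ 2 * n = 1), if_neg (by omega : ¬ 2 * n - 1 = 1),
        if_neg (by omega : ¬ n = 1)]
      rw [show 2 * n - 1 - 1 = 2 * n - 2 by omega, show 2 * n - 1 = 2 * n - 1 from rfl]
      rw [hq2n, hq2n2]
      omega
  -- conclusion
  have hw1 : w 1 = 1 := by
    refine hwuniq 1 1 le_rfl le_rfl (by simp [he0]) ?_
    have := hemono (show 0 < 1 by omega); omega
  refine ⟨hw1, fun n hn => ?_⟩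
  constructor
  · have hpn := hpar n hn
    have hstep' := hstep (2 * n - 1) (by omega)
    rw [show 2 * n - 1 + 1 = 2 * n by omega] at hstep'
    have hdn := hdle n
    by_cases h0 : dabs q n = 0
    · have : dabs q (2 * n) = dabs q (2 * n - 1) := (lemB n hn).mpr h0
      rw [hstep'.1 this]
      omega
    · have : dabs q (2 * n) ≠ dabs q (2 * n - 1) := fun h => h0 ((lemB n hn).mp h)
      rw [hstep'.2 this]
      omega
  · exact (hstep (2 * n) (by omega)).2 (lemA n hn)
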